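/- Let n ≥ 2 be an integer, let t ≥ 1, and let A be a subset of Z_n \ {0} with |A| = 2t. Then there exist at least 2^t subsets B of A with |B| = t such that the elements of B can be ordered so that all partial sums of the ordering are pairwise distinct in Z_n. -/

import Mathlib

/-- The partial sums of the ordering `l` are pairwise distinct. -/
def distinctPartialSums {n : ℕ} (l : List (ZMod n)) : Prop :=
  ∀ i j : ℕ, i < j → j < l.length → (l.take (i + 1)).sum ≠ (l.take (j + 1)).sum

namespace PS

variable {n : ℕ}

/-- Valid extensions of a list `l`: elements of `A` not already used and not
creating a repeated partial sum. -/
def ext (A : Finset (ZMod n)) (l : List (ZMod n)) : Finset (ZMod n) :=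
  A \ (l.toFinset ∪ (Finset.range l.length).image (fun i => (l.take (i + 1)).sum - l.sum))

/-- Good sequences of length `k`. -/
def G (A : Finset (ZMod n)) : ℕ → Finset (List (ZMod n))
  | 0 => {[]}
  | (k + 1) => (G A k).biUnion fun l => (ext A l).image (fun b => l ++ [b])

theorem G_prop (A : Finset (ZMod n)) (k : ℕ) :
    ∀ l ∈ G A k, l.length = k ∧ l.Nodup ∧ (∀ x ∈ l, x ∈ A) ∧ distinctPartialSums l := by
  induction k with
  | zero =>
    intro l hl
    simp only [G, Finset.mem_singleton] at hl
    subst hl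
    refine ⟨rfl, by simp, by simp, ?_⟩
    intro i j hij hj
    simp at hj
  | succ k ih =>
    intro l hl
    simp only [G, Finset.mem_biUnion, Finset.mem_image] at hl
    obtain ⟨m, hm, b, hb, rfl⟩ := hl
    obtain ⟨hlen, hnd, hsub, hdps⟩ := ih m hm
    simp only [ext, Finset.mem_sdiff, Finset.mem_union, Finset.mem_image, Finset.mem_range,
      List.mem_toFinset, not_or, not_exists] at hb
    obtain ⟨hbA, hbm, hbs⟩ := hb
    push_neg at hbs
    refine ⟨by simp [hlen], ?_, ?_, ?_⟩
    · simp [List.nodup_append, hnd, hbm]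
      rintro a ha rfl
      exact hbm ha
    · intro x hx
      rcases List.mem_append.1 hx with h | h
      · exact hsub x h
      · simp at h; subst h; exact hbA
    · intro i j hij hj
      simp only [List.length_append, List.length_singleton, hlen] at hj
      have htake : ∀ a : ℕ, a ≤ k → ((m ++ [b]).take a) = m.take a := by
        intro a ha
        rw [List.take_append_of_le_length (by omega)]
      rcases Nat.lt_or_ge j k with hjk | hjk
      · rw [htake (i+1) (by omega), htake (j+1) (by omega)]
        exact hdps i j hij (by omega)
      · have hj' : j = k := by omega
        rw [hj']
        rw [htake (i+1) (by omega)]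
        have h2 : ((m ++ [b]).take (k + 1)) = m ++ [b] := by
          apply List.take_of_length_le
          simp [hlen]
        rw [h2]
        have hbs' := hbs i (by omega)
        simp only [List.sum_append, List.sum_cons, List.sum_nil, add_zero]
        intro hcon
        apply hbs'
        rw [hcon]
        ring
end PS

namespace PS
variable {n : ℕ}

theorem card_G_succ (A : Finset (ZMod n)) (k : ℕ) :
    (G A (k + 1)).card = ∑ l ∈ G A k, (ext A l).card := by
  rw [G, Finset.card_biUnion]
  · apply Finset.sum_congr rfl
    intro l _
    apply Finset.card_image_of_injective
    intro b1 b2 h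
    simpa using h
  · intro l1 h1 l2 h2 hne
    simp only [Finset.disjoint_left, Finset.mem_image]
    rintro x ⟨b1, _, rfl⟩ ⟨b2, _, hx⟩
    apply hne
    have := congrArg List.dropLast hx
    simpa [List.dropLast_concat] using this.symm

theorem ext_card_ge (A : Finset (ZMod n)) (t k : ℕ) (hA : A.card = 2 * t)
    (l : List (ZMod n)) (hl : l ∈ G A k) (hk : k ≤ t) :
    2 * (t - k) ≤ (ext A l).card := by
  obtain ⟨hlen, hnd, _, _⟩ := G_prop A k l hl
  have h1 : A.card ≤ (ext A l).card +
      (l.toFinset ∪ (Finset.range l.length).image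
        (fun i => (l.take (i + 1)).sum - l.sum)).card :=
    Finset.card_le_card_sdiff_add_card
  have h2 : (l.toFinset ∪ (Finset.range l.length).image
      (fun i => (l.take (i + 1)).sum - l.sum)).card ≤ k + k := by
    apply le_trans (Finset.card_union_le _ _)
    have e1 : l.toFinset.card ≤ k := by
      rw [← hlen]; exact l.toFinset_card_le
    have e2 : ((Finset.range l.length).image
        (fun i => (l.take (i + 1)).sum - l.sum)).card ≤ k := by
      apply le_trans (Finset.card_image_le)
      simp [hlen]
    omega
  omega

theorem card_G_ge (A : Finset (ZMod n)) (t : ℕ) (hA : A.card = 2 * t) :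
    ∀ k, k ≤ t → 2 ^ k * t.descFactorial k ≤ (G A k).card := by
  intro k
  induction k with
  | zero => intro _; simp [G]
  | succ k ih =>
    intro hk
    have ih' := ih (by omega)
    rw [card_G_succ]
    have hsum : (G A k).card * (2 * (t - k)) ≤ ∑ l ∈ G A k, (ext A l).card := by
      calc (G A k).card * (2 * (t - k)) = ∑ _l ∈ G A k, 2 * (t - k) := by
            rw [Finset.sum_const, smul_eq_mul]
        _ ≤ ∑ l ∈ G A k, (ext A l).card :=
            Finset.sum_le_sum (fun l hl => ext_card_ge A t k hA l hl (by omega))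
    calc 2 ^ (k + 1) * t.descFactorial (k + 1)
        = (2 ^ k * t.descFactorial k) * (2 * (t - k)) := by
          rw [Nat.descFactorial_succ]; ring
      _ ≤ (G A k).card * (2 * (t - k)) :=
          Nat.mul_le_mul_right _ ih'
      _ ≤ _ := hsum

end PS

theorem card_orderable_half_subsets_ge
    (n : ℕ) (hn : 2 ≤ n) (t : ℕ) (ht : 1 ≤ t) (A : Finset (ZMod n))
    (h0 : (0 : ZMod n) ∉ A) (hcard : A.card = 2 * t) :
    2 ^ t ≤ {B : Finset (ZMod n) | B ⊆ A ∧ B.card = t ∧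
      ∃ l : List (ZMod n), l.Nodup ∧ l.toFinset = B ∧
        distinctPartialSums l}.ncard := by
  haveI : NeZero n := ⟨by omega⟩
  set S := {B : Finset (ZMod n) | B ⊆ A ∧ B.card = t ∧
      ∃ l : List (ZMod n), l.Nodup ∧ l.toFinset = B ∧
        distinctPartialSums l} with hS
  set F := (PS.G A t).image List.toFinset with hF
  -- basic facts about members of G A t
  have hmem : ∀ B ∈ F, B ⊆ A ∧ B.card = t ∧
      ∃ l : List (ZMod n), l.Nodup ∧ l.toFinset = B ∧ distinctPartialSums l := by
    intro B hB
    rw [hF, Finset.mem_image] at hB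
    obtain ⟨l, hl, rfl⟩ := hB
    obtain ⟨hlen, hnd, hsub, hdps⟩ := PS.G_prop A t l hl
    refine ⟨?_, ?_, l, hnd, rfl, hdps⟩
    · intro x hx
      exact hsub x (List.mem_toFinset.1 hx)
    · rw [List.toFinset_card_of_nodup hnd, hlen]
  -- fiber bound
  have hfiber : ∀ B ∈ F, ((PS.G A t).filter (fun l => l.toFinset = B)).card ≤ (Nat.factorial t) := by
    intro B hB
    obtain ⟨_, hBcard, _⟩ := hmem B hB
    have hsub : (PS.G A t).filter (fun l => l.toFinset = B) ⊆
        B.toList.permutations.toFinset := by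
      intro l hl
      rw [Finset.mem_filter] at hl
      obtain ⟨hlG, hlB⟩ := hl
      obtain ⟨_, hnd, _, _⟩ := PS.G_prop A t l hlG
      rw [List.mem_toFinset, List.mem_permutations]
      exact List.perm_of_nodup_nodup_toFinset_eq hnd (Finset.nodup_toList B)
        (by rw [hlB, Finset.toList_toFinset])
    calc ((PS.G A t).filter (fun l => l.toFinset = B)).card
        ≤ B.toList.permutations.toFinset.card := Finset.card_le_card hsub
      _ ≤ B.toList.permutations.length := List.toFinset_card_le _
      _ = Nat.factorial B.toList.length := List.length_permutations _
      _ = (Nat.factorial t) := by rw [Finset.length_toList, hBcard]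
  have hG : 2 ^ t * (Nat.factorial t) ≤ (PS.G A t).card := by
    have := PS.card_G_ge A t hcard t le_rfl
    rwa [Nat.descFactorial_self] at this
  have hcount : (PS.G A t).card ≤ (Nat.factorial t) * F.card :=
    Finset.card_le_mul_card_image _ _ hfiber
  have hFcard : 2 ^ t ≤ F.card := by
    have h1 : 2 ^ t * (Nat.factorial t) ≤ (Nat.factorial t) * F.card := le_trans hG hcount
    rw [mul_comm ((Nat.factorial t)) _] at h1
    exact Nat.le_of_mul_le_mul_right h1 (Nat.factorial_pos t)
  refine le_trans hFcard ?_
  have hsubS : (F : Set (Finset (ZMod n))) ⊆ S := by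
    intro B hB
    exact hmem B hB
  calc F.card = (F : Set (Finset (ZMod n))).ncard := (Set.ncard_coe_finset F).symm
    _ ≤ S.ncard := Set.ncard_le_ncard hsubS (Set.toFinite S)
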